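/- Let 1 ≤ p < ∞, let w be an admissible Lorentz weight, and let (j_k) be a sequence of positive integers with J_k = Σ_{m≤k} m·j_m. Suppose there exist constants A, B > 0 such that for all k and all 1 ≤ i ≤ k: (i) w_i^(j_k) ≤ A w_i, and (ii) B w_i ≤ (1/W_{j_k}) Σ_{n=J_{k-1}+(i-1)j_k+1}^{J_{k-1}+i j_k} w_n. Then for every finitely supported double array of scalars (a_i^(k))_{1≤i≤k, k≥1}, B · Σ_k ‖(a_i^(k))_{i=1}^k‖_{d(w,p)}^p ≤ ‖Σ_k Σ_{i=1}^k a_i^(k) d_i^{(j_k), k}‖_{d(w,p)}^p ≤ A^p · Σ_k ‖(a_i^(k))_{i=1}^k‖_{d(w,p)}^p, where d_i^{(j_k), k} denotes the normalized constant-coefficient block of the d(w,p) unit vector basis of length j_k supported on coordinates J_{k-1}+(i-1)j_k+1 through J_{k-1}+i j_k. -/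

import Mathlib

open Filter

/-- The Lorentz sequence space norm (coordinates indexed by `ℕ` starting at 0, so `w n` is the
paper's `w_{n+1}`): `‖f‖_{d(w,p)} = (sup_{π ∈ Perm ℕ} Σ_n |f(π n)|^p w_n)^{1/p}`. -/
noncomputable def lorentzNorm (w : ℕ → ℝ) (p : ℝ) (f : ℕ → ℝ) : ℝ :=
  (⨆ π : Equiv.Perm ℕ, ∑' n : ℕ, |f (π n)| ^ p * w n) ^ (1 / p)

open Finset

lemma sum_card_le {w : ℕ → ℝ} (hw : Antitone w) (hw0 : ∀ n, 0 ≤ w n) (s : Finset ℕ) :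
    ∑ n ∈ s, w n ≤ ∑ i ∈ Finset.range s.card, w i := by
  have H : ∀ (m : ℕ) (s : Finset ℕ), s.card = m →
      ∑ n ∈ s, w n ≤ ∑ i ∈ Finset.range m, w i := by
    intro m
    induction m with
    | zero => intro s hn; simp [Finset.card_eq_zero.mp hn]
    | succ m ih =>
      intro s hn
      have hne : s.Nonempty := Finset.card_pos.mp (by omega)
      set M := s.max' hne with hM
      have hMs : M ∈ s := s.max'_mem hne
      have hsub : s ⊆ Finset.range (M + 1) := by
        intro x hx
        simp only [Finset.mem_range, Nat.lt_succ_iff]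
        exact s.le_max' x hx
      have hcard : s.card ≤ M + 1 := by simpa using Finset.card_le_card hsub
      have hmM : m ≤ M := by omega
      have h1 : ∑ n ∈ s.erase M, w n ≤ ∑ i ∈ Finset.range m, w i := by
        refine ih _ ?_
        rw [Finset.card_erase_of_mem hMs, hn]
        omega
      calc ∑ n ∈ s, w n = ∑ n ∈ s.erase M, w n + w M := by
            rw [Finset.sum_erase_add _ _ hMs]
        _ ≤ ∑ i ∈ Finset.range m, w i + w m := add_le_add h1 (hw hmM)
        _ = ∑ i ∈ Finset.range (m + 1), w i := (Finset.sum_range_succ w m).symm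
  exact H s.card s rfl

lemma abel_le (N : ℕ) (x y z : ℕ → ℝ)
    (hx : ∀ ⦃i j⦄, i ≤ j → j < N → x j ≤ x i)
    (hx0 : ∀ i, i < N → 0 ≤ x i)
    (hyz : ∀ m, m ≤ N → ∑ i ∈ Finset.range m, y i ≤ ∑ i ∈ Finset.range m, z i) :
    ∑ i ∈ Finset.range N, x i * y i ≤ ∑ i ∈ Finset.range N, x i * z i := by
  induction N generalizing x with
  | zero => simp
  | succ N ih =>
    set x' : ℕ → ℝ := fun i => x i - x N with hx'
    have hx'0 : ∀ i, i < N → 0 ≤ x' i := fun i hi => by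
      simp only [hx', sub_nonneg]
      exact hx (le_of_lt hi) (Nat.lt_succ_self N)
    have hx'anti : ∀ ⦃i j⦄, i ≤ j → j < N → x' j ≤ x' i := fun i j hij hj => by
      simp only [hx', sub_le_sub_iff_right]
      exact hx hij (by omega)
    have hmain := ih x' hx'anti hx'0 (fun m hm => hyz m (by omega))
    have e1 : ∀ u : ℕ → ℝ, ∑ i ∈ Finset.range (N+1), x i * u i
        = ∑ i ∈ Finset.range N, x' i * u i + x N * ∑ i ∈ Finset.range (N+1), u i := by
      intro u
      rw [Finset.sum_range_succ (fun i => x i * u i), Finset.mul_sum,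
        Finset.sum_range_succ (fun i => x N * u i)]
      simp only [hx', sub_mul, Finset.sum_sub_distrib]
      ring
    rw [e1 y, e1 z]
    refine add_le_add hmain ?_
    exact mul_le_mul_of_nonneg_left (hyz (N+1) le_rfl) (hx0 N (Nat.lt_succ_self N))

lemma list_sum_getD (l : List ℕ) (f : ℕ → ℝ) :
    ∑ i ∈ Finset.range l.length, f (l.getD i 0) = (l.map f).sum := by
  induction l with
  | nil => simp
  | cons a t ih =>
    simp only [List.length_cons, List.map_cons, List.sum_cons]
    rw [Finset.sum_range_succ']
    simp only [List.getD_cons_succ, List.getD_cons_zero, ih]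
    ring

/-- Indices `0,…,N-1` sorted so that `c` is decreasing along the list. -/
noncomputable def sidx (c : ℕ → ℝ) (N : ℕ) : List ℕ :=
  (List.range N).mergeSort fun m n => @decide (c n ≤ c m) (Classical.propDecidable _)

lemma sidx_perm (c : ℕ → ℝ) (N : ℕ) : (sidx c N).Perm (List.range N) :=
  List.mergeSort_perm _ _

lemma sidx_length (c : ℕ → ℝ) (N : ℕ) : (sidx c N).length = N := by
  rw [(sidx_perm c N).length_eq, List.length_range]

lemma sidx_sorted (c : ℕ → ℝ) (N : ℕ) :
    (sidx c N).Pairwise (fun m n => c n ≤ c m) := by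
  have := List.pairwise_mergeSort (le := fun m n => @decide (c n ≤ c m) (Classical.propDecidable _))
    (fun a b cc hab hbc => by
      simp only [decide_eq_true_eq] at *
      exact le_trans hbc hab)
    (fun a b => by
      simp only [Bool.or_eq_true, decide_eq_true_eq]
      exact (le_total (c b) (c a)))
    (List.range N)
  refine List.Pairwise.imp ?_ this
  intro a b h
  simpa using h

lemma sidx_lt (c : ℕ → ℝ) (N : ℕ) {i : ℕ} (hi : i < N) : (sidx c N).getD i 0 < N := by
  have h1 : i < (sidx c N).length := by rw [sidx_length]; exact hi
  rw [List.getD_eq_getElem _ _ h1]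
  have := (sidx_perm c N).mem_iff.mp (List.getElem_mem h1)
  simpa using this

lemma sidx_anti (c : ℕ → ℝ) (N : ℕ) {i i' : ℕ} (h : i ≤ i') (hi' : i' < N) :
    c ((sidx c N).getD i' 0) ≤ c ((sidx c N).getD i 0) := by
  rcases eq_or_lt_of_le h with rfl | hlt
  · exact le_rfl
  · have h2 : i' < (sidx c N).length := by rw [sidx_length]; exact hi'
    have h1 : i < (sidx c N).length := lt_trans hlt h2
    rw [List.getD_eq_getElem _ _ h1, List.getD_eq_getElem _ _ h2]
    exact List.pairwise_iff_getElem.mp (sidx_sorted c N) i i' h1 h2 hlt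

lemma sidx_injOn (c : ℕ → ℝ) (N : ℕ) {i i' : ℕ} (hi : i < N) (hi' : i' < N)
    (h : (sidx c N).getD i 0 = (sidx c N).getD i' 0) : i = i' := by
  have hnd : (sidx c N).Nodup := (sidx_perm c N).nodup_iff.mpr (List.nodup_range (n := N))
  have h1 : i < (sidx c N).length := by rw [sidx_length]; exact hi
  have h2 : i' < (sidx c N).length := by rw [sidx_length]; exact hi'
  rw [List.getD_eq_getElem _ _ h1, List.getD_eq_getElem _ _ h2] at h
  have : (⟨i, h1⟩ : Fin (sidx c N).length) = ⟨i', h2⟩ :=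
    List.nodup_iff_injective_get.mp hnd (by simpa [List.get_eq_getElem] using h)
  exact congrArg Fin.val this

/-- Reindexing a sum over `range N` along the sorted list. -/
lemma sum_sidx (c : ℕ → ℝ) (N : ℕ) (f : ℕ → ℝ) :
    ∑ m ∈ Finset.range N, f m = ∑ i ∈ Finset.range N, f ((sidx c N).getD i 0) := by
  have h1 : ∑ i ∈ Finset.range (sidx c N).length, f ((sidx c N).getD i 0)
      = ((sidx c N).map f).sum := list_sum_getD _ _
  have h2 : ∑ i ∈ Finset.range (List.range N).length, f ((List.range N).getD i 0)
      = ((List.range N).map f).sum := list_sum_getD _ _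
  have h3 : ((sidx c N).map f).sum = ((List.range N).map f).sum :=
    ((sidx_perm c N).map f).sum_eq
  have h4 : ∀ i ∈ Finset.range N, f ((List.range N).getD i 0) = f i := by
    intro i hi
    rw [List.getD_eq_getElem _ _ (by simpa using Finset.mem_range.mp hi), List.getElem_range]
  rw [sidx_length] at h1
  rw [List.length_range] at h2
  rw [← Finset.sum_congr rfl h4, h2, ← h3, ← h1]

/-- The Lorentz pairing: sorted-decreasing values of `c` on `range N` paired with `w`. -/
noncomputable def Lam (w c : ℕ → ℝ) (N : ℕ) : ℝ :=
  ∑ i ∈ Finset.range N, c ((sidx c N).getD i 0) * w i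

lemma Lam_nonneg {w c : ℕ → ℝ} (hw0 : ∀ n, 0 ≤ w n) (hc0 : ∀ n, 0 ≤ c n) (N : ℕ) :
    0 ≤ Lam w c N :=
  Finset.sum_nonneg fun i _ => mul_nonneg (hc0 _) (hw0 _)

/-- Hardy–Littlewood-type upper bound: pairing `c` with `w` along any injection is at most
the sorted pairing. -/
lemma sum_mul_w_le {w : ℕ → ℝ} (hw : Antitone w) (hw0 : ∀ n, 0 ≤ w n)
    {c : ℕ → ℝ} (hc0 : ∀ n, 0 ≤ c n) (N : ℕ) {g : ℕ → ℕ} (hg : Function.Injective g) :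
    ∑ m ∈ Finset.range N, c m * w (g m) ≤ Lam w c N := by
  classical
  rw [sum_sidx c N (fun m => c m * w (g m))]
  refine abel_le N (fun i => c ((sidx c N).getD i 0)) (fun i => w (g ((sidx c N).getD i 0)))
    (fun i => w i) (fun i i' h hi' => sidx_anti c N h hi') (fun i _ => hc0 _) ?_
  intro m hm
  set u : ℕ → ℕ := fun i => g ((sidx c N).getD i 0) with hu
  have hinj : ∀ x ∈ Finset.range m, ∀ y ∈ Finset.range m, u x = u y → x = y := by
    intro x hx y hy hxy
    exact sidx_injOn c N (lt_of_lt_of_le (Finset.mem_range.mp hx) hm)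
      (lt_of_lt_of_le (Finset.mem_range.mp hy) hm) (hg hxy)
  have h1 : ∑ i ∈ Finset.range m, w (u i)
      = ∑ n ∈ (Finset.range m).image u, w n := (Finset.sum_image hinj).symm
  have h2 : ((Finset.range m).image u).card = m := by
    rw [Finset.card_image_of_injOn hinj, Finset.card_range]
  calc ∑ i ∈ Finset.range m, w (u i) = ∑ n ∈ (Finset.range m).image u, w n := h1
    _ ≤ ∑ i ∈ Finset.range ((Finset.range m).image u).card, w i := sum_card_le hw hw0 _
    _ = ∑ i ∈ Finset.range m, w i := by rw [h2]

/-- A self-map of `ℕ` that is the identity off `range M`, maps `range M` into itself and is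
injective there, is a bijection. -/
lemma bij_ext {v : ℕ → ℕ} {M : ℕ} (hid : ∀ n, M ≤ n → v n = n)
    (hmap : ∀ n, n < M → v n < M)
    (hinj : ∀ a, a < M → ∀ b, b < M → v a = v b → a = b) :
    Function.Bijective v := by
  classical
  constructor
  · intro a b hab
    rcases lt_or_ge a M with ha | ha <;> rcases lt_or_ge b M with hb | hb
    · exact hinj a ha b hb hab
    · exfalso; rw [hid b hb] at hab; have := hmap a ha; omega
    · exfalso; rw [hid a ha] at hab; have := hmap b hb; omega
    · rw [hid a ha, hid b hb] at hab; exact hab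
  · intro m
    rcases lt_or_ge m M with hm | hm
    · have hinj' : ∀ x ∈ Finset.range M, ∀ y ∈ Finset.range M, v x = v y → x = y := by
        intro x hx y hy
        exact hinj x (Finset.mem_range.mp hx) y (Finset.mem_range.mp hy)
      have hsub : (Finset.range M).image v ⊆ Finset.range M := by
        intro x hx
        obtain ⟨n, hn, rfl⟩ := Finset.mem_image.mp hx
        exact Finset.mem_range.mpr (hmap n (Finset.mem_range.mp hn))
      have := Finset.eq_of_subset_of_card_le hsub
        (by rw [Finset.card_image_of_injOn hinj', Finset.card_range])
      have hm' : m ∈ (Finset.range M).image v := by rw [this]; exact Finset.mem_range.mpr hm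
      obtain ⟨n, _, hn⟩ := Finset.mem_image.mp hm'
      exact ⟨n, hn⟩
    · exact ⟨m, hid m hm⟩

/-- Computing `∑' n, c (π n) * w n` for `c` supported in `range N`. -/
lemma tsum_perm_eq {w : ℕ → ℝ} {c : ℕ → ℝ} {N : ℕ} (hc : ∀ m, c m ≠ 0 → m < N)
    (π : Equiv.Perm ℕ) :
    ∑' n : ℕ, c (π n) * w n = ∑ m ∈ Finset.range N, c m * w (π.symm m) := by
  classical
  have h1 : ∑' n : ℕ, c (π n) * w n
      = ∑ n ∈ (Finset.range N).image π.symm, c (π n) * w n := by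
    refine tsum_eq_sum ?_
    intro n hn
    rcases eq_or_ne (c (π n)) 0 with h | h
    · rw [h, zero_mul]
    · exfalso
      refine hn (Finset.mem_image.mpr ⟨π n, Finset.mem_range.mpr (hc _ h), ?_⟩)
      simp
  rw [h1, Finset.sum_image (by intro x _ y _ h; exact π.symm.injective h)]
  refine Finset.sum_congr rfl fun m _ => ?_
  simp

/-- The supremum over permutations equals the sorted pairing. -/
lemma iSup_perm_eq {w : ℕ → ℝ} (hw : Antitone w) (hw0 : ∀ n, 0 ≤ w n)
    {c : ℕ → ℝ} (hc0 : ∀ n, 0 ≤ c n) {N : ℕ} (hc : ∀ m, c m ≠ 0 → m < N) :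
    (⨆ π : Equiv.Perm ℕ, ∑' n : ℕ, c (π n) * w n) = Lam w c N := by
  classical
  have hub : ∀ π : Equiv.Perm ℕ, ∑' n : ℕ, c (π n) * w n ≤ Lam w c N := by
    intro π
    rw [tsum_perm_eq hc π]
    exact sum_mul_w_le hw hw0 hc0 N π.symm.injective
  refine le_antisymm (Real.iSup_le hub (Lam_nonneg hw0 hc0 N)) ?_
  -- construct the optimal permutation
  set v : ℕ → ℕ := fun i => if i < N then (sidx c N).getD i 0 else i with hv
  have hbij : Function.Bijective v := by
    refine bij_ext (M := N) (fun n hn => by simp [hv, Nat.not_lt.mpr hn]) ?_ ?_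
    · intro n hn; simpa [hv, hn] using sidx_lt c N hn
    · intro a ha b hb hab
      simp only [hv, ha, hb, if_pos] at hab
      exact sidx_injOn c N ha hb hab
  set e : Equiv.Perm ℕ := Equiv.ofBijective v hbij with he
  have hev : ∀ i, e i = v i := fun i => rfl
  have hF : ∑' n : ℕ, c (e n) * w n = Lam w c N := by
    rw [tsum_perm_eq hc e, sum_sidx c N (fun m => c m * w (e.symm m))]
    refine Finset.sum_congr rfl fun i hi => ?_
    have hi' := Finset.mem_range.mp hi
    have : e.symm ((sidx c N).getD i 0) = i := by
      apply e.injective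
      rw [Equiv.apply_symm_apply, hev]
      simp [hv, hi']
    rw [this]
  rw [← hF]
  exact le_ciSup (f := fun π : Equiv.Perm ℕ => ∑' n : ℕ, c (π n) * w n)
    ⟨Lam w c N, by rintro _ ⟨π, rfl⟩; exact hub π⟩ e

/-- `lorentzNorm ^ p` as a sorted pairing, for finitely supported `f`. -/
lemma lorentzNorm_rpow {w : ℕ → ℝ} (hw : Antitone w) (hw0 : ∀ n, 0 ≤ w n)
    {p : ℝ} (hp : 1 ≤ p) {f : ℕ → ℝ} {N : ℕ} (hf : ∀ m, f m ≠ 0 → m < N) :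
    lorentzNorm w p f ^ p = Lam w (fun m => |f m| ^ p) N := by
  have hp0 : (0:ℝ) < p := lt_of_lt_of_le one_pos hp
  have hc0 : ∀ n, (0:ℝ) ≤ |f n| ^ p := fun n => Real.rpow_nonneg (abs_nonneg _) _
  have hc : ∀ m, |f m| ^ p ≠ 0 → m < N := by
    intro m hm
    refine hf m fun h => hm ?_
    rw [h, abs_zero, Real.zero_rpow (ne_of_gt hp0)]
  have hkey : (⨆ π : Equiv.Perm ℕ, ∑' n : ℕ, |f (π n)| ^ p * w n)
      = Lam w (fun m => |f m| ^ p) N := iSup_perm_eq hw hw0 hc0 hc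
  rw [lorentzNorm, hkey, ← Real.rpow_mul (Lam_nonneg hw0 hc0 N),
    one_div_mul_cancel (ne_of_gt hp0), Real.rpow_one]

lemma sum_Ico_mul (f : ℕ → ℝ) (a m q : ℕ) :
    ∑ n ∈ Finset.Ico a (a + m*q), f n
      = ∑ r ∈ Finset.range m, ∑ n ∈ Finset.Ico (a + r*q) (a + (r+1)*q), f n := by
  induction m with
  | zero => simp
  | succ m ih =>
    have h2 : a + m*q ≤ a + (m+1)*q := by
      have : m * q ≤ (m+1) * q := Nat.mul_le_mul_right q (by omega)
      omega
    rw [Finset.sum_range_succ, ← ih,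
      Finset.sum_Ico_consecutive f (Nat.le_add_right a (m*q)) h2]

lemma sum_range_partition (f : ℕ → ℝ) (J : ℕ → ℕ) (K : ℕ) (hJ0 : J 0 = 0)
    (hmono : Monotone J) :
    ∑ n ∈ Finset.range (J K), f n
      = ∑ k ∈ Finset.Icc 1 K, ∑ n ∈ Finset.Ico (J (k-1)) (J k), f n := by
  induction K with
  | zero => simp [hJ0]
  | succ K ih =>
    rw [Finset.sum_Icc_succ_top (by omega : 1 ≤ K + 1), ← ih]
    simp only [Nat.add_sub_cancel]
    rw [Finset.range_eq_Ico, Finset.range_eq_Ico]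
    exact (Finset.sum_Ico_consecutive f (Nat.zero_le _) (hmono (by omega : K ≤ K + 1))).symm

def blo (J j : ℕ → ℕ) (k i : ℕ) : Finset ℕ :=
  Finset.Ico (J (k-1) + (i-1) * j k) (J (k-1) + i * j k)

lemma blo_card {J j : ℕ → ℕ} {k i : ℕ} (hi : 1 ≤ i) : (blo J j k i).card = j k := by
  obtain ⟨m, rfl⟩ := Nat.exists_eq_add_of_le hi
  rw [blo, Nat.card_Ico]
  have h1 : (1 + m) * j k = m * j k + j k := by ring
  have h2 : (1 + m - 1) * j k = m * j k := by simp
  rw [h1, h2]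
  omega

lemma blo_nomem_core {J j : ℕ → ℕ} (hstep : ∀ k, 1 ≤ k → J k = J (k-1) + k * j k)
    (hmono : Monotone J) {k i k' i' n : ℕ} (h1 : 1 ≤ i) (h2 : i ≤ k) (h2' : i' ≤ k')
    (hlt : k < k' ∨ (k = k' ∧ i < i'))
    (hn : n ∈ blo J j k i) (hn' : n ∈ blo J j k' i') : False := by
  rw [blo, Finset.mem_Ico] at hn hn'
  rcases hlt with hkk | ⟨rfl, hii⟩
  · have hk1 : 1 ≤ k := le_trans h1 h2
    have hchain : n < n := calc
      n < J (k-1) + i * j k := hn.2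
      _ ≤ J (k-1) + k * j k := Nat.add_le_add_left (Nat.mul_le_mul_right _ h2) _
      _ = J k := (hstep k hk1).symm
      _ ≤ J (k'-1) := hmono (by omega)
      _ ≤ J (k'-1) + (i'-1) * j k' := Nat.le_add_right _ _
      _ ≤ n := hn'.1
    exact lt_irrefl n hchain
  · have hchain : n < n := calc
      n < J (k-1) + i * j k := hn.2
      _ ≤ J (k-1) + (i'-1) * j k := Nat.add_le_add_left (Nat.mul_le_mul_right _ (by omega)) _
      _ ≤ n := hn'.1
    exact lt_irrefl n hchain

lemma blo_nomem {J j : ℕ → ℕ} (hstep : ∀ k, 1 ≤ k → J k = J (k-1) + k * j k)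
    (hmono : Monotone J) {k i k' i' n : ℕ} (h1 : 1 ≤ i) (h2 : i ≤ k) (h1' : 1 ≤ i')
    (h2' : i' ≤ k') (hne : ¬ (k = k' ∧ i = i')) (hn : n ∈ blo J j k i) :
    n ∉ blo J j k' i' := by
  intro hn'
  rcases Nat.lt_trichotomy k k' with hk | rfl | hk
  · exact blo_nomem_core hstep hmono h1 h2 h2' (Or.inl hk) hn hn'
  · rcases Nat.lt_trichotomy i i' with hi | rfl | hi
    · exact blo_nomem_core hstep hmono h1 h2 h2' (Or.inr ⟨rfl, hi⟩) hn hn'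
    · exact hne ⟨rfl, rfl⟩
    · exact blo_nomem_core hstep hmono h1' h2' h2 (Or.inr ⟨rfl, hi⟩) hn' hn
  · exact blo_nomem_core hstep hmono h1' h2' h2 (Or.inl hk) hn' hn

lemma blo_subset_range {J j : ℕ → ℕ} (hstep : ∀ k, 1 ≤ k → J k = J (k-1) + k * j k)
    (hmono : Monotone J) {k i K : ℕ} (h1 : 1 ≤ i) (h2 : i ≤ k) (hk : k ≤ K) :
    blo J j k i ⊆ Finset.range (J K) := by
  intro n hn
  rw [blo, Finset.mem_Ico] at hn
  have hk1 : 1 ≤ k := le_trans h1 h2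
  refine Finset.mem_range.mpr ?_
  calc n < J (k-1) + i * j k := hn.2
    _ ≤ J (k-1) + k * j k := Nat.add_le_add_left (Nat.mul_le_mul_right _ h2) _
    _ = J k := (hstep k hk1).symm
    _ ≤ J K := hmono hk

noncomputable def gbig (w : ℕ → ℝ) (p : ℝ) (j J : ℕ → ℕ) (a : ℕ → ℕ → ℝ) (K : ℕ)
    (n : ℕ) : ℝ :=
  ∑ k ∈ Finset.Icc 1 K, ∑ i ∈ Finset.Icc 1 k,
    a k i * (if n ∈ Finset.Ico (J (k - 1) + (i - 1) * j k) (J (k - 1) + i * j k) then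
      (∑ m ∈ Finset.range (j k), w m) ^ (-(1 / p)) else 0)

noncomputable def Wk (w : ℕ → ℝ) (j : ℕ → ℕ) (k : ℕ) : ℝ := ∑ m ∈ Finset.range (j k), w m

lemma gbig_eq_sigma (w : ℕ → ℝ) (p : ℝ) (j J : ℕ → ℕ) (a : ℕ → ℕ → ℝ) (K : ℕ) (n : ℕ) :
    gbig w p j J a K n = ∑ q ∈ (Finset.Icc 1 K).sigma (fun k => Finset.Icc 1 k),
      (if n ∈ blo J j q.1 q.2 then a q.1 q.2 * (Wk w j q.1) ^ (-(1 / p)) else 0) := by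
  rw [gbig, Finset.sum_sigma]
  refine Finset.sum_congr rfl fun k _ => Finset.sum_congr rfl fun i _ => ?_
  rw [mul_ite, mul_zero]
  rfl

section main

variable {w : ℕ → ℝ} {p : ℝ} {j J : ℕ → ℕ} {a : ℕ → ℕ → ℝ} {K : ℕ}

lemma gbig_val (hstep : ∀ k, 1 ≤ k → J k = J (k-1) + k * j k) (hmono : Monotone J)
    {k i n : ℕ} (hk1 : 1 ≤ k) (hkK : k ≤ K) (hi1 : 1 ≤ i) (hik : i ≤ k)
    (hn : n ∈ blo J j k i) :
    gbig w p j J a K n = a k i * (Wk w j k) ^ (-(1 / p)) := by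
  classical
  rw [gbig_eq_sigma]
  have hmem : (⟨k, i⟩ : Σ _ : ℕ, ℕ) ∈ (Finset.Icc 1 K).sigma (fun k => Finset.Icc 1 k) := by
    simp [Finset.mem_sigma, Finset.mem_Icc]
    omega
  rw [Finset.sum_eq_single_of_mem _ hmem, if_pos hn]
  intro q hq hne
  rw [Finset.mem_sigma, Finset.mem_Icc, Finset.mem_Icc] at hq
  refine if_neg (blo_nomem hstep hmono hi1 hik hq.2.1 hq.2.2 ?_ hn)
  rintro ⟨rfl, rfl⟩
  exact hne rfl

lemma gbig_zero (hstep : ∀ k, 1 ≤ k → J k = J (k-1) + k * j k) (hmono : Monotone J)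
    {n : ℕ} (hn : ∀ k i, 1 ≤ k → k ≤ K → 1 ≤ i → i ≤ k → n ∉ blo J j k i) :
    gbig w p j J a K n = 0 := by
  classical
  rw [gbig_eq_sigma]
  refine Finset.sum_eq_zero fun q hq => ?_
  rw [Finset.mem_sigma, Finset.mem_Icc, Finset.mem_Icc] at hq
  exact if_neg (hn q.1 q.2 hq.1.1 hq.1.2 hq.2.1 hq.2.2)

lemma gbig_supp (hstep : ∀ k, 1 ≤ k → J k = J (k-1) + k * j k) (hmono : Monotone J)
    {n : ℕ} (hn : J K ≤ n) : gbig w p j J a K n = 0 := by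
  refine gbig_zero hstep hmono fun k i hk1 hkK hi1 hik hmem => ?_
  have := blo_subset_range hstep hmono hi1 hik hkK hmem
  rw [Finset.mem_range] at this
  omega

/-- pointwise identity for `|g n| ^ p`. -/
lemma gbig_abs_rpow (hstep : ∀ k, 1 ≤ k → J k = J (k-1) + k * j k) (hmono : Monotone J)
    (hp0 : 0 < p) (hw0 : ∀ n, 0 ≤ w n) (n : ℕ) :
    |gbig w p j J a K n| ^ p = ∑ q ∈ (Finset.Icc 1 K).sigma (fun k => Finset.Icc 1 k),
      (if n ∈ blo J j q.1 q.2 then |a q.1 q.2| ^ p * (Wk w j q.1)⁻¹ else 0) := by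
  classical
  have hW0 : ∀ k, (0:ℝ) ≤ Wk w j k := fun k => Finset.sum_nonneg fun m _ => hw0 m
  by_cases hex : ∃ q ∈ (Finset.Icc 1 K).sigma (fun k => Finset.Icc 1 k), n ∈ blo J j q.1 q.2
  · obtain ⟨q₀, hq₀D, hq₀⟩ := hex
    rw [Finset.mem_sigma, Finset.mem_Icc, Finset.mem_Icc] at hq₀D
    have h1 : gbig w p j J a K n = a q₀.1 q₀.2 * (Wk w j q₀.1) ^ (-(1 / p)) :=
      gbig_val hstep hmono hq₀D.1.1 hq₀D.1.2 hq₀D.2.1 hq₀D.2.2 hq₀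
    have h2 : ∑ q ∈ (Finset.Icc 1 K).sigma (fun k => Finset.Icc 1 k),
        (if n ∈ blo J j q.1 q.2 then |a q.1 q.2| ^ p * (Wk w j q.1)⁻¹ else 0)
        = |a q₀.1 q₀.2| ^ p * (Wk w j q₀.1)⁻¹ := by
      rw [Finset.sum_eq_single_of_mem _ (by
        rw [Finset.mem_sigma, Finset.mem_Icc, Finset.mem_Icc]; exact hq₀D), if_pos hq₀]
      intro q hq hne
      rw [Finset.mem_sigma, Finset.mem_Icc, Finset.mem_Icc] at hq
      refine if_neg (blo_nomem hstep hmono hq₀D.2.1 hq₀D.2.2 hq.2.1 hq.2.2 ?_ hq₀)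
      rintro ⟨h1', h2'⟩
      exact hne (Sigma.ext h1'.symm (heq_of_eq h2'.symm))
    rw [h1, h2, abs_mul, Real.mul_rpow (abs_nonneg _) (abs_nonneg _)]
    congr 1
    rw [abs_of_nonneg (Real.rpow_nonneg (hW0 q₀.1) _), ← Real.rpow_mul (hW0 q₀.1),
      neg_mul, one_div_mul_cancel (ne_of_gt hp0), Real.rpow_neg_one]
  · push_neg at hex
    have h1 : gbig w p j J a K n = 0 := by
      refine gbig_zero hstep hmono fun k i hk1 hkK hi1 hik => ?_
      exact hex ⟨k, i⟩ (by rw [Finset.mem_sigma, Finset.mem_Icc, Finset.mem_Icc]; exact ⟨⟨hk1, hkK⟩, hi1, hik⟩)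
    rw [h1, abs_zero, Real.zero_rpow (ne_of_gt hp0)]
    exact (Finset.sum_eq_zero fun q hq => if_neg (hex q hq)).symm

end main

section main2

variable {w : ℕ → ℝ} {p : ℝ} {j J : ℕ → ℕ} {a : ℕ → ℕ → ℝ} {K : ℕ}

lemma gbig_tsum (hstep : ∀ k, 1 ≤ k → J k = J (k-1) + k * j k) (hmono : Monotone J)
    (hp0 : 0 < p) (hw0 : ∀ n, 0 ≤ w n) (π : Equiv.Perm ℕ) :
    ∑' n : ℕ, |gbig w p j J a K (π n)| ^ p * w n
      = ∑ q ∈ (Finset.Icc 1 K).sigma (fun k => Finset.Icc 1 k),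
        |a q.1 q.2| ^ p * (Wk w j q.1)⁻¹ * (∑ m ∈ (blo J j q.1 q.2).image π.symm, w m) := by
  classical
  have h1 : ∀ n, |gbig w p j J a K (π n)| ^ p * w n
      = ∑ q ∈ (Finset.Icc 1 K).sigma (fun k => Finset.Icc 1 k),
        (if π n ∈ blo J j q.1 q.2 then |a q.1 q.2| ^ p * (Wk w j q.1)⁻¹ * w n else 0) := by
    intro n
    rw [gbig_abs_rpow hstep hmono hp0 hw0, Finset.sum_mul]
    exact Finset.sum_congr rfl fun q _ => by rw [ite_mul, zero_mul]
  have hsumm : ∀ q ∈ (Finset.Icc 1 K).sigma (fun k => Finset.Icc 1 k),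
      Summable (fun n => if π n ∈ blo J j q.1 q.2
        then |a q.1 q.2| ^ p * (Wk w j q.1)⁻¹ * w n else 0) := by
    intro q _
    refine summable_of_ne_finset_zero (s := (blo J j q.1 q.2).image π.symm) ?_
    intro n hn
    refine if_neg fun hmem => hn ?_
    exact Finset.mem_image.mpr ⟨π n, hmem, by simp⟩
  rw [tsum_congr h1, Summable.tsum_finsetSum hsumm]
  refine Finset.sum_congr rfl fun q hq => ?_
  rw [tsum_eq_sum (s := (blo J j q.1 q.2).image π.symm)
    (fun n hn => if_neg fun hmem => hn (Finset.mem_image.mpr ⟨π n, hmem, by simp⟩))]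
  rw [Finset.mul_sum]
  refine Finset.sum_congr rfl fun n hn => ?_
  obtain ⟨m, hm, rfl⟩ := Finset.mem_image.mp hn
  rw [if_pos (by simpa using hm)]

lemma upper_k (hw : Antitone w) (hwpos : ∀ n, 0 < w n) (hp0 : 0 < p) (A : ℝ)
    (hstep : ∀ k, 1 ≤ k → J k = J (k-1) + k * j k) (hmono : Monotone J)
    {k : ℕ} (hk1 : 1 ≤ k) (hjk : 1 ≤ j k)
    (hik : ∀ i, 1 ≤ i → i ≤ k →
      (∑ n ∈ Finset.Ico ((i - 1) * j k) (i * j k), w n)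
        ≤ A * w (i-1) * (∑ n ∈ Finset.range (j k), w n))
    (π : Equiv.Perm ℕ) :
    ∑ i ∈ Finset.Icc 1 k, |a k i| ^ p * (Wk w j k)⁻¹
        * (∑ m ∈ (blo J j k i).image π.symm, w m)
      ≤ A * Lam w (fun m => |if m + 1 ≤ k then a k (m+1) else 0| ^ p) k := by
  classical
  set c : ℕ → ℝ := fun m => |if m + 1 ≤ k then a k (m+1) else 0| ^ p with hcdef
  set σ : ℕ → ℕ := fun r => (sidx c k).getD r 0 with hσdef
  set S : ℕ → ℝ := fun i => ∑ m ∈ (blo J j k i).image π.symm, w m with hSdef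
  have hc0 : ∀ m, 0 ≤ c m := fun m => Real.rpow_nonneg (abs_nonneg _) _
  have hceq : ∀ m, m < k → c m = |a k (m+1)| ^ p := by
    intro m hm
    have h : m + 1 ≤ k := by omega
    simp only [hcdef, h, if_true]
  have hWpos : 0 < Wk w j k :=
    Finset.sum_pos (fun m _ => hwpos m) (by rw [Finset.nonempty_range_iff]; omega)
  have hstep1 : ∑ i ∈ Finset.Icc 1 k, |a k i| ^ p * (Wk w j k)⁻¹ * S i
      = (Wk w j k)⁻¹ * ∑ i ∈ Finset.Icc 1 k, |a k i| ^ p * S i := by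
    rw [Finset.mul_sum]
    exact Finset.sum_congr rfl fun i _ => by ring
  have hreindex : ∀ φ : ℕ → ℝ, ∑ i ∈ Finset.Icc 1 k, φ i
      = ∑ m ∈ Finset.range k, φ (m+1) := by
    intro φ
    rw [← Finset.Ico_add_one_right_eq_Icc, Finset.sum_Ico_eq_sum_range]
    exact Finset.sum_congr (by norm_num) fun m _ => by rw [Nat.add_comm]
  have hstep2 : ∑ i ∈ Finset.Icc 1 k, |a k i| ^ p * S i
      = ∑ r ∈ Finset.range k, c (σ r) * S (σ r + 1) := by
    rw [hreindex (fun i => |a k i| ^ p * S i)]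
    have e1 : ∑ m ∈ Finset.range k, |a k (m+1)| ^ p * S (m+1)
        = ∑ m ∈ Finset.range k, c m * S (m+1) :=
      Finset.sum_congr rfl fun m hm => by rw [hceq m (Finset.mem_range.mp hm)]
    rw [e1]
    exact sum_sidx c k (fun m => c m * S (m+1))
  have habel : ∑ r ∈ Finset.range k, c (σ r) * S (σ r + 1)
      ≤ ∑ r ∈ Finset.range k, c (σ r) * (A * w r * Wk w j k) := by
    refine abel_le k (fun r => c (σ r)) (fun r => S (σ r + 1))
      (fun r => A * w r * Wk w j k) (fun r r' hrr' hr' => sidx_anti c k hrr' hr')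
      (fun r _ => hc0 _) ?_
    intro m hm
    set T : ℕ → Finset ℕ := fun r => (blo J j k (σ r + 1)).image π.symm with hTdef
    have hσlt : ∀ r, r < m → σ r < k := fun r hr => sidx_lt c k (lt_of_lt_of_le hr hm)
    have hdisj : (↑(Finset.range m) : Set ℕ).PairwiseDisjoint T := by
      intro r hr r' hr' hne
      simp only [Finset.coe_range, Set.mem_Iio] at hr hr'
      have h1 := hσlt r hr
      have h2 := hσlt r' hr'
      have hσne : σ r ≠ σ r' := fun h =>
        hne (sidx_injOn c k (lt_of_lt_of_le hr hm) (lt_of_lt_of_le hr' hm) h)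
      refine Finset.disjoint_image π.symm.injective |>.mpr ?_
      refine Finset.disjoint_left.mpr fun n hn hn' => ?_
      exact (blo_nomem hstep hmono (by omega) (by omega) (by omega) (by omega)
        (by rintro ⟨-, h⟩; exact hσne (by omega)) hn) hn'
    have hbi : ∑ r ∈ Finset.range m, ∑ n ∈ T r, w n
        = ∑ n ∈ (Finset.range m).biUnion T, w n := (Finset.sum_biUnion hdisj).symm
    have hcard : ((Finset.range m).biUnion T).card = m * j k := by
      rw [Finset.card_biUnion (fun r hr r' hr' hne => hdisj (by simpa using hr)
        (by simpa using hr') hne)]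
      have : ∀ r ∈ Finset.range m, (T r).card = j k := by
        intro r _
        rw [hTdef]
        simp only
        rw [Finset.card_image_of_injective _ π.symm.injective, blo_card (by omega)]
      rw [Finset.sum_congr rfl this, Finset.sum_const, Finset.card_range, smul_eq_mul]
    calc ∑ r ∈ Finset.range m, S (σ r + 1) = ∑ n ∈ (Finset.range m).biUnion T, w n := hbi
      _ ≤ ∑ i ∈ Finset.range (((Finset.range m).biUnion T).card), w i :=
          sum_card_le hw (fun n => le_of_lt (hwpos n)) _
      _ = ∑ i ∈ Finset.range (m * j k), w i := by rw [hcard]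
      _ = ∑ r ∈ Finset.range m, ∑ n ∈ Finset.Ico (r * j k) ((r+1) * j k), w n := by
          have := sum_Ico_mul w 0 m (j k)
          simpa using this
      _ ≤ ∑ r ∈ Finset.range m, A * w r * Wk w j k := by
          refine Finset.sum_le_sum fun r hr => ?_
          have := hik (r+1) (by omega) (by have := Finset.mem_range.mp hr; omega)
          simpa [Wk] using this
  have hfinal : ∑ r ∈ Finset.range k, c (σ r) * (A * w r * Wk w j k)
      = A * Wk w j k * Lam w c k := by
    rw [Lam, Finset.mul_sum]
    exact Finset.sum_congr rfl fun r _ => by rw [hσdef]; ring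
  calc ∑ i ∈ Finset.Icc 1 k, |a k i| ^ p * (Wk w j k)⁻¹ * S i
      = (Wk w j k)⁻¹ * ∑ i ∈ Finset.Icc 1 k, |a k i| ^ p * S i := hstep1
    _ ≤ (Wk w j k)⁻¹ * (A * Wk w j k * Lam w c k) := by
        refine mul_le_mul_of_nonneg_left ?_ (le_of_lt (inv_pos.mpr hWpos))
        rw [← hfinal]
        exact le_trans (le_of_eq hstep2) habel
    _ = A * Lam w c k := by
        rw [show (Wk w j k)⁻¹ * (A * Wk w j k * Lam w c k)
          = A * Lam w c k * ((Wk w j k)⁻¹ * Wk w j k) by ring,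
          inv_mul_cancel₀ (ne_of_gt hWpos), mul_one]

end main2

section main3

variable {w : ℕ → ℝ} {p : ℝ} {j J : ℕ → ℕ} {a : ℕ → ℕ → ℝ} {K : ℕ}

lemma find_eq {J : ℕ → ℕ} (hmono : Monotone J) {n k : ℕ} (hk1 : 1 ≤ k)
    (hlow : J (k-1) ≤ n) (hhigh : n < J k) (H : ∃ t, n < J t) :
    Nat.find H = k := by
  rw [Nat.find_eq_iff]
  exact ⟨hhigh, fun t ht => not_lt.mpr (le_trans (hmono (by omega : t ≤ k-1)) hlow)⟩

lemma decomp (hstep : ∀ k, 1 ≤ k → J k = J (k-1) + k * j k) (hmono : Monotone J)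
    (hJ0 : J 0 = 0) (hjpos : ∀ k, 1 ≤ k → 1 ≤ j k) {n : ℕ} (hn : n < J K) :
    ∃ k r s, 1 ≤ k ∧ k ≤ K ∧ r < k ∧ s < j k ∧ n = J (k-1) + r * j k + s := by
  have H : ∃ t, n < J t := ⟨K, hn⟩
  have hspec : n < J (Nat.find H) := Nat.find_spec H
  set k := Nat.find H with hk
  have hkK : k ≤ K := Nat.find_min' H hn
  have hk1 : 1 ≤ k := by
    by_contra h
    have hk0 : k = 0 := by omega
    rw [hk0, hJ0] at hspec
    omega
  have hlow : J (k-1) ≤ n := by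
    by_contra h
    push_neg at h
    exact Nat.find_min H (by omega : k - 1 < k) h
  have hjk : 1 ≤ j k := hjpos k hk1
  have h2 : J k = J (k-1) + k * j k := hstep k hk1
  refine ⟨k, (n - J (k-1)) / j k, (n - J (k-1)) % j k, hk1, hkK, ?_, Nat.mod_lt _ (by omega), ?_⟩
  · rw [Nat.div_lt_iff_lt_mul (by omega)]
    omega
  · have h3 := Nat.div_add_mod (n - J (k-1)) (j k)
    rw [Nat.mul_comm] at h3
    omega

lemma hmem_blo {J j : ℕ → ℕ} {k r s : ℕ} (hr : r < k) (hs : s < j k) :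
    (J (k-1) + r * j k + s) ∈ blo J j k (r+1) := by
  rw [blo, Finset.mem_Ico]
  have h1 : (r+1) * j k = r * j k + j k := by ring
  constructor
  · simp only [Nat.add_sub_cancel]
    omega
  · omega

lemma gbig_abs_val (hstep : ∀ k, 1 ≤ k → J k = J (k-1) + k * j k) (hmono : Monotone J)
    (hp0 : 0 < p) (hw0 : ∀ n, 0 ≤ w n)
    {k i n : ℕ} (hk1 : 1 ≤ k) (hkK : k ≤ K) (hi1 : 1 ≤ i) (hik : i ≤ k)
    (hn : n ∈ blo J j k i) :
    |gbig w p j J a K n| ^ p = |a k i| ^ p * (Wk w j k)⁻¹ := by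
  classical
  rw [gbig_abs_rpow hstep hmono hp0 hw0 n (a := a) (K := K)]
  rw [Finset.sum_eq_single_of_mem (⟨k, i⟩ : Σ _ : ℕ, ℕ)
    (by rw [Finset.mem_sigma, Finset.mem_Icc, Finset.mem_Icc]; exact ⟨⟨hk1, hkK⟩, hi1, hik⟩),
    if_pos hn]
  intro q hq hne
  rw [Finset.mem_sigma, Finset.mem_Icc, Finset.mem_Icc] at hq
  refine if_neg ((blo_nomem hstep hmono hi1 hik hq.2.1 hq.2.2 ?_ hn))
  rintro ⟨h1', h2'⟩
  exact hne (Sigma.ext h1'.symm (heq_of_eq h2'.symm))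

lemma lower_bound (hw : Antitone w) (hwpos : ∀ n, 0 < w n) (hp0 : 0 < p)
    (hjpos : ∀ k, 1 ≤ k → 1 ≤ j k)
    (hstep : ∀ k, 1 ≤ k → J k = J (k-1) + k * j k) (hmono : Monotone J) (hJ0 : J 0 = 0)
    {B : ℝ} (hB : 0 < B)
    (hiik : ∀ k, 1 ≤ k → ∀ r, r < k →
      B * w r * (∑ n ∈ Finset.range (j k), w n) ≤
        ∑ s ∈ Finset.range (j k), w (J (k-1) + r * j k + s)) :
    ∃ e : Equiv.Perm ℕ,
      B * ∑ k ∈ Finset.Icc 1 K,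
          Lam w (fun m => |if m + 1 ≤ k then a k (m+1) else 0| ^ p) k
        ≤ ∑' n : ℕ, |gbig w p j J a K (e n)| ^ p * w n := by
  classical
  set c : ℕ → ℕ → ℝ := fun k m => |if m + 1 ≤ k then a k (m+1) else 0| ^ p with hcdef
  set σ : ℕ → ℕ → ℕ := fun k r => (sidx (c k) k).getD r 0 with hσdef
  have hc0 : ∀ k m, 0 ≤ c k m := fun k m => Real.rpow_nonneg (abs_nonneg _) _
  have hceq : ∀ k m, m < k → c k m = |a k (m+1)| ^ p := by
    intro k m hm
    have h : m + 1 ≤ k := by omega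
    simp only [hcdef, h, if_true]
  set v : ℕ → ℕ := fun n => if h : n < J K then
      J (Nat.find (⟨K, h⟩ : ∃ t, n < J t) - 1)
        + σ (Nat.find (⟨K, h⟩ : ∃ t, n < J t))
            ((n - J (Nat.find (⟨K, h⟩ : ∃ t, n < J t) - 1)) / j (Nat.find (⟨K, h⟩ : ∃ t, n < J t)))
          * j (Nat.find (⟨K, h⟩ : ∃ t, n < J t))
        + (n - J (Nat.find (⟨K, h⟩ : ∃ t, n < J t) - 1)) % j (Nat.find (⟨K, h⟩ : ∃ t, n < J t))
    else n with hvdef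
  have hσlt : ∀ k r, r < k → σ k r < k := fun k r hr => sidx_lt (c k) k hr
  have hveq : ∀ k, 1 ≤ k → k ≤ K → ∀ r, r < k → ∀ s, s < j k →
      v (J (k-1) + r * j k + s) = J (k-1) + σ k r * j k + s := by
    intro k hk1 hkK r hr s hs
    have hjk : 1 ≤ j k := hjpos k hk1
    have hr1 : (r+1) * j k ≤ k * j k := Nat.mul_le_mul_right _ (by omega)
    have hr2 : (r+1) * j k = r * j k + j k := by ring
    have hnJk : J (k-1) + r * j k + s < J k := by
      rw [hstep k hk1]
      omega
    have hnJK : J (k-1) + r * j k + s < J K := lt_of_lt_of_le hnJk (hmono hkK)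
    have hfind : Nat.find (⟨K, hnJK⟩ : ∃ t, J (k-1) + r * j k + s < J t) = k :=
      find_eq hmono hk1 (by omega) hnJk _
    rw [hvdef]
    simp only [dif_pos hnJK, hfind]
    have hsub : J (k-1) + r * j k + s - J (k-1) = s + r * j k := by omega
    rw [hsub, Nat.add_mul_div_right _ _ (by omega : 0 < j k),
      Nat.div_eq_of_lt hs, Nat.zero_add, Nat.add_mul_mod_self_right, Nat.mod_eq_of_lt hs]
  have hvmap : ∀ n, n < J K → v n < J K := by
    intro n hn
    obtain ⟨k, r, s, hk1, hkK, hr, hs, rfl⟩ := decomp hstep hmono hJ0 hjpos hn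
    rw [hveq k hk1 hkK r hr s hs]
    have h1 : (σ k r + 1) * j k ≤ k * j k := Nat.mul_le_mul_right _ (by have := hσlt k r hr; omega)
    have h2 : (σ k r + 1) * j k = σ k r * j k + j k := by ring
    have h3 := hstep k hk1
    have h4 : J k ≤ J K := hmono hkK
    have hjk : 1 ≤ j k := hjpos k hk1
    omega
  have hvinj : ∀ a', a' < J K → ∀ b, b < J K → v a' = v b → a' = b := by
    intro a' ha' b hb hab
    obtain ⟨k, r, s, hk1, hkK, hr, hs, rfl⟩ := decomp hstep hmono hJ0 hjpos ha'
    obtain ⟨k', r', s', hk1', hkK', hr', hs', rfl⟩ := decomp hstep hmono hJ0 hjpos hb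
    rw [hveq k hk1 hkK r hr s hs, hveq k' hk1' hkK' r' hr' s' hs'] at hab
    have hm1 : (J (k-1) + σ k r * j k + s) ∈ blo J j k (σ k r + 1) :=
      hmem_blo (hσlt k r hr) hs
    have hm2 : (J (k-1) + σ k r * j k + s) ∈ blo J j k' (σ k' r' + 1) := by
      rw [hab]
      exact hmem_blo (hσlt k' r' hr') hs'
    have hkk' : k = k' ∧ σ k r = σ k' r' := by
      by_contra hcon
      refine (blo_nomem hstep hmono (by omega) (by have := hσlt k r hr; omega)
        (by omega) (by have := hσlt k' r' hr'; omega) ?_ hm1) hm2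
      rintro ⟨h1', h2'⟩
      exact hcon ⟨h1', by omega⟩
    obtain ⟨rfl, hσeq⟩ := hkk'
    have hrr : r = r' := sidx_injOn (c k) k hr hr' hσeq
    subst hrr
    omega
  have hbij : Function.Bijective v := by
    refine bij_ext (M := J K) (fun n hn => by rw [hvdef]; exact dif_neg (not_lt.mpr hn))
      hvmap hvinj
  refine ⟨Equiv.ofBijective v hbij, ?_⟩
  have he : ∀ n, (Equiv.ofBijective v hbij) n = v n := fun n => rfl
  set h : ℕ → ℝ := fun n => |gbig w p j J a K ((Equiv.ofBijective v hbij) n)| ^ p * w n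
    with hhdef
  have hh0 : ∀ n, 0 ≤ h n := fun n =>
    mul_nonneg (Real.rpow_nonneg (abs_nonneg _) _) (le_of_lt (hwpos n))
  have hhz : ∀ n, n ∉ Finset.range (J K) → h n = 0 := by
    intro n hn
    rw [Finset.mem_range, not_lt] at hn
    have h1 : v n = n := by rw [hvdef]; exact dif_neg (not_lt.mpr hn)
    rw [hhdef]
    simp only
    rw [he, h1, gbig_supp hstep hmono hn, abs_zero, Real.zero_rpow (ne_of_gt hp0), zero_mul]
  have hsumm : Summable h := summable_of_ne_finset_zero hhz
  have hWpos : ∀ k, 1 ≤ k → 0 < Wk w j k := fun k hk =>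
    Finset.sum_pos (fun m _ => hwpos m)
      (by rw [Finset.nonempty_range_iff]; have := hjpos k hk; omega)
  -- main chain
  have hperk : ∀ k ∈ Finset.Icc 1 K, B * Lam w (c k) k
      ≤ ∑ n ∈ Finset.Ico (J (k-1)) (J k), h n := by
    intro k hk
    rw [Finset.mem_Icc] at hk
    obtain ⟨hk1, hkK⟩ := hk
    have hjk : 1 ≤ j k := hjpos k hk1
    have hWk := hWpos k hk1
    rw [hstep k hk1, sum_Ico_mul h (J (k-1)) k (j k), Lam, Finset.mul_sum]
    refine Finset.sum_le_sum fun r hr => ?_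
    have hrk : r < k := Finset.mem_range.mp hr
    have hσr : σ k r < k := hσlt k r hrk
    have hlen : J (k-1) + (r+1) * j k - (J (k-1) + r * j k) = j k := by
      have : (r+1) * j k = r * j k + j k := by ring
      omega
    rw [Finset.sum_Ico_eq_sum_range, hlen]
    have hterm : ∀ s ∈ Finset.range (j k),
        h (J (k-1) + r * j k + s) = c k (σ k r) * (Wk w j k)⁻¹ * w (J (k-1) + r * j k + s) := by
      intro s hs
      rw [Finset.mem_range] at hs
      rw [hhdef]
      simp only
      rw [he, hveq k hk1 hkK r hrk s hs,
        gbig_abs_val hstep hmono hp0 (fun n => le_of_lt (hwpos n)) hk1 hkK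
          (by omega : 1 ≤ σ k r + 1) (by omega : σ k r + 1 ≤ k)
          (hmem_blo hσr hs),
        hceq k (σ k r) hσr]
    calc B * (c k ((sidx (c k) k).getD r 0) * w r)
        = c k (σ k r) * (Wk w j k)⁻¹ * (B * w r * Wk w j k) := by
          rw [hσdef]
          field_simp
      _ ≤ c k (σ k r) * (Wk w j k)⁻¹
            * ∑ s ∈ Finset.range (j k), w (J (k-1) + r * j k + s) := by
          refine mul_le_mul_of_nonneg_left (hiik k hk1 r hrk) ?_
          exact mul_nonneg (hc0 k _) (le_of_lt (inv_pos.mpr hWk))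
      _ = ∑ s ∈ Finset.range (j k),
            c k (σ k r) * (Wk w j k)⁻¹ * w (J (k-1) + r * j k + s) := by
          rw [Finset.mul_sum]
      _ = ∑ s ∈ Finset.range (j k), h (J (k-1) + r * j k + s) :=
          (Finset.sum_congr rfl hterm).symm
      _ = ∑ s ∈ Finset.range (j k), h (J (k-1) + r * j k + s) := rfl
  calc B * ∑ k ∈ Finset.Icc 1 K, Lam w (c k) k
      = ∑ k ∈ Finset.Icc 1 K, B * Lam w (c k) k := Finset.mul_sum _ _ _
    _ ≤ ∑ k ∈ Finset.Icc 1 K, ∑ n ∈ Finset.Ico (J (k-1)) (J k), h n :=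
        Finset.sum_le_sum hperk
    _ = ∑ n ∈ Finset.range (J K), h n := (sum_range_partition h J K hJ0 hmono).symm
    _ ≤ ∑' n : ℕ, h n := hsumm.sum_le_tsum _ (fun n _ => hh0 n)

end main3

/-- Lemma (block equivalence): under the two weight estimates (i) `w_i^{(j_k)} ≤ A w_i` and
(ii) `B w_i ≤ (1/W_{j_k}) Σ_{n=J_{k-1}+(i-1)j_k+1}^{J_{k-1}+i j_k} w_n`, any finitely supported
array of coefficients applied to the shifted normalized constant-coefficient blocks
`d_i^{(j_k),k}` satisfies
`B Σ_k ‖(a_i^{(k)})_{i≤k}‖^p ≤ ‖Σ_{k,i} a_i^{(k)} d_i^{(j_k),k}‖^p ≤ A^p Σ_k ‖(a_i^{(k)})_{i≤k}‖^p`,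
i.e. the blocks are equivalent to the canonical basis of `(⊕_k d(w,p)^k)_p`. -/
theorem stmt17 (p : ℝ) (hp : 1 ≤ p) (w : ℕ → ℝ) (hw1 : w 0 = 1) (hwpos : ∀ n, 0 < w n)
    (hwmono : Antitone w) (hwc0 : Tendsto w atTop (nhds 0)) (hwdiv : ¬ Summable w)
    (j : ℕ → ℕ) (hjpos : ∀ k, 1 ≤ k → 1 ≤ j k)
    (J : ℕ → ℕ) (hJ : ∀ k, J k = ∑ m ∈ Finset.Icc 1 k, m * j m)
    (A B : ℝ) (hA : 0 < A) (hB : 0 < B)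
    (hi : ∀ k, 1 ≤ k → ∀ i, 1 ≤ i → i ≤ k →
      (∑ n ∈ Finset.Ico ((i - 1) * j k) (i * j k), w n) /
          (∑ n ∈ Finset.range (j k), w n) ≤ A * w (i - 1))
    (hii : ∀ k, 1 ≤ k → ∀ i, 1 ≤ i → i ≤ k →
      B * w (i - 1) ≤
        (∑ n ∈ Finset.Ico (J (k - 1) + (i - 1) * j k) (J (k - 1) + i * j k), w n) /
          (∑ n ∈ Finset.range (j k), w n))
    (K : ℕ) (a : ℕ → ℕ → ℝ)
    (hsupp : ∀ k i, (k < 1 ∨ K < k ∨ i < 1 ∨ k < i) → a k i = 0) :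
    B * ∑ k ∈ Finset.Icc 1 K,
        lorentzNorm w p (fun i => if i + 1 ≤ k then a k (i + 1) else 0) ^ p ≤
      lorentzNorm w p (fun n => ∑ k ∈ Finset.Icc 1 K, ∑ i ∈ Finset.Icc 1 k,
        a k i * (if n ∈ Finset.Ico (J (k - 1) + (i - 1) * j k) (J (k - 1) + i * j k) then
          (∑ m ∈ Finset.range (j k), w m) ^ (-(1 / p)) else 0)) ^ p ∧
    lorentzNorm w p (fun n => ∑ k ∈ Finset.Icc 1 K, ∑ i ∈ Finset.Icc 1 k,
        a k i * (if n ∈ Finset.Ico (J (k - 1) + (i - 1) * j k) (J (k - 1) + i * j k) then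
          (∑ m ∈ Finset.range (j k), w m) ^ (-(1 / p)) else 0)) ^ p ≤
      A ^ p * ∑ k ∈ Finset.Icc 1 K,
        lorentzNorm w p (fun i => if i + 1 ≤ k then a k (i + 1) else 0) ^ p := by
  classical
  have hp0 : (0:ℝ) < p := lt_of_lt_of_le one_pos hp
  have hw0 : ∀ n, (0:ℝ) ≤ w n := fun n => le_of_lt (hwpos n)
  -- J structure
  have hJ0 : J 0 = 0 := by rw [hJ]; simp
  have hstep : ∀ k, 1 ≤ k → J k = J (k-1) + k * j k := by
    intro k hk
    cases k with
    | zero => omega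
    | succ m =>
      rw [hJ, hJ, Finset.sum_Icc_succ_top (by omega : 1 ≤ m + 1)]
      simp
  have hmono : Monotone J := by
    refine monotone_nat_of_le_succ fun k => ?_
    rw [hstep (k+1) (by omega)]
    simp
  -- weight positivity
  have hWpos : ∀ k, 1 ≤ k → (0:ℝ) < ∑ m ∈ Finset.range (j k), w m := fun k hk =>
    Finset.sum_pos (fun m _ => hwpos m)
      (by rw [Finset.nonempty_range_iff]; have := hjpos k hk; omega)
  -- A ≥ 1
  have hA1 : (1:ℝ) ≤ A := by
    have h := hi 1 le_rfl 1 le_rfl le_rfl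
    rw [show (1:ℕ) - 1 = 0 from rfl, zero_mul, one_mul, ← Finset.range_eq_Ico,
      div_self (ne_of_gt (hWpos 1 le_rfl)), hw1, mul_one] at h
    exact h
  have hAp : A ≤ A ^ p := by
    calc A = A ^ (1:ℝ) := (Real.rpow_one A).symm
      _ ≤ A ^ p := Real.rpow_le_rpow_of_exponent_le hA1 hp
  -- the coefficient profile functions
  have hnorm : ∀ k, lorentzNorm w p (fun i => if i + 1 ≤ k then a k (i + 1) else 0) ^ p
      = Lam w (fun m => |if m + 1 ≤ k then a k (m+1) else 0| ^ p) k := by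
    intro k
    refine lorentzNorm_rpow hwmono hw0 hp ?_
    intro m hm
    by_contra hc
    push_neg at hc
    exact hm (if_neg (by omega))
  have hLam0 : (0:ℝ) ≤ ∑ k ∈ Finset.Icc 1 K,
      Lam w (fun m => |if m + 1 ≤ k then a k (m+1) else 0| ^ p) k :=
    Finset.sum_nonneg fun k _ =>
      Lam_nonneg hw0 (fun m => Real.rpow_nonneg (abs_nonneg _) _) k
  -- identify the big vector with `gbig`
  have hgg : (fun n => ∑ k ∈ Finset.Icc 1 K, ∑ i ∈ Finset.Icc 1 k,
        a k i * (if n ∈ Finset.Ico (J (k - 1) + (i - 1) * j k) (J (k - 1) + i * j k) then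
          (∑ m ∈ Finset.range (j k), w m) ^ (-(1 / p)) else 0)) = gbig w p j J a K := rfl
  rw [hgg]
  -- the norm of the big vector as a sup
  have hSup0 : (0:ℝ) ≤ ⨆ π : Equiv.Perm ℕ, ∑' n, |gbig w p j J a K (π n)| ^ p * w n :=
    Real.iSup_nonneg fun π => tsum_nonneg fun n =>
      mul_nonneg (Real.rpow_nonneg (abs_nonneg _) _) (hw0 n)
  have hgoal1 : lorentzNorm w p (gbig w p j J a K) ^ p
      = ⨆ π : Equiv.Perm ℕ, ∑' n, |gbig w p j J a K (π n)| ^ p * w n := by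
    rw [lorentzNorm, ← Real.rpow_mul hSup0, one_div_mul_cancel (ne_of_gt hp0),
      Real.rpow_one]
  -- upper bound for every permutation
  have hFle : ∀ π : Equiv.Perm ℕ, (∑' n, |gbig w p j J a K (π n)| ^ p * w n)
      ≤ A * ∑ k ∈ Finset.Icc 1 K,
          Lam w (fun m => |if m + 1 ≤ k then a k (m+1) else 0| ^ p) k := by
    intro π
    rw [gbig_tsum hstep hmono hp0 hw0 π, Finset.sum_sigma]
    calc ∑ k ∈ Finset.Icc 1 K, ∑ i ∈ Finset.Icc 1 k,
          |a k i| ^ p * (Wk w j k)⁻¹ * (∑ m ∈ (blo J j k i).image π.symm, w m)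
        ≤ ∑ k ∈ Finset.Icc 1 K,
            A * Lam w (fun m => |if m + 1 ≤ k then a k (m+1) else 0| ^ p) k := by
          refine Finset.sum_le_sum fun k hk => ?_
          rw [Finset.mem_Icc] at hk
          refine upper_k hwmono hwpos hp0 A hstep hmono hk.1 (hjpos k hk.1) ?_ π
          intro i hi1 hik
          have h := hi k hk.1 i hi1 hik
          rw [div_le_iff₀ (hWpos k hk.1)] at h
          exact h
      _ = A * ∑ k ∈ Finset.Icc 1 K,
            Lam w (fun m => |if m + 1 ≤ k then a k (m+1) else 0| ^ p) k :=
          (Finset.mul_sum _ _ _).symm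
  have hub : (⨆ π : Equiv.Perm ℕ, ∑' n, |gbig w p j J a K (π n)| ^ p * w n)
      ≤ A ^ p * ∑ k ∈ Finset.Icc 1 K,
          Lam w (fun m => |if m + 1 ≤ k then a k (m+1) else 0| ^ p) k := by
    refine Real.iSup_le (fun π => le_trans (hFle π) ?_)
      (mul_nonneg (Real.rpow_nonneg (le_of_lt hA) _) hLam0)
    exact mul_le_mul_of_nonneg_right hAp hLam0
  constructor
  · -- lower bound
    have hiik : ∀ k, 1 ≤ k → ∀ r, r < k →
        B * w r * (∑ n ∈ Finset.range (j k), w n) ≤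
          ∑ s ∈ Finset.range (j k), w (J (k-1) + r * j k + s) := by
      intro k hk1 r hr
      have h := hii k hk1 (r+1) (by omega) (by omega)
      rw [Nat.add_sub_cancel, le_div_iff₀ (hWpos k hk1)] at h
      have hlen : J (k-1) + (r+1) * j k - (J (k-1) + r * j k) = j k := by
        have : (r+1) * j k = r * j k + j k := by ring
        omega
      rw [Finset.sum_Ico_eq_sum_range, hlen] at h
      exact h
    obtain ⟨e, he⟩ := lower_bound (a := a) (K := K) (p := p) hwmono hwpos hp0 hjpos
      hstep hmono hJ0 hB hiik
    calc B * ∑ k ∈ Finset.Icc 1 K,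
          lorentzNorm w p (fun i => if i + 1 ≤ k then a k (i + 1) else 0) ^ p
        = B * ∑ k ∈ Finset.Icc 1 K,
            Lam w (fun m => |if m + 1 ≤ k then a k (m+1) else 0| ^ p) k := by
          rw [Finset.sum_congr rfl (fun k _ => hnorm k)]
      _ ≤ ∑' n, |gbig w p j J a K (e n)| ^ p * w n := he
      _ ≤ ⨆ π : Equiv.Perm ℕ, ∑' n, |gbig w p j J a K (π n)| ^ p * w n := by
          refine le_ciSup (f := fun π : Equiv.Perm ℕ =>
            ∑' n, |gbig w p j J a K (π n)| ^ p * w n) ?_ e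
          exact ⟨A ^ p * ∑ k ∈ Finset.Icc 1 K,
            Lam w (fun m => |if m + 1 ≤ k then a k (m+1) else 0| ^ p) k,
            by rintro _ ⟨π, rfl⟩
               exact le_trans (hFle π) (mul_le_mul_of_nonneg_right hAp hLam0)⟩
      _ = lorentzNorm w p (gbig w p j J a K) ^ p := hgoal1.symm
  · calc lorentzNorm w p (gbig w p j J a K) ^ p
        = ⨆ π : Equiv.Perm ℕ, ∑' n, |gbig w p j J a K (π n)| ^ p * w n := hgoal1
      _ ≤ A ^ p * ∑ k ∈ Finset.Icc 1 K,
            Lam w (fun m => |if m + 1 ≤ k then a k (m+1) else 0| ^ p) k := hub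
      _ = A ^ p * ∑ k ∈ Finset.Icc 1 K,
            lorentzNorm w p (fun i => if i + 1 ≤ k then a k (i + 1) else 0) ^ p := by
          rw [Finset.sum_congr rfl (fun k _ => hnorm k)]
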